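/- Let p ∈ (0,1), q ∈ (0,1) with q < p, and W > 0, v̄ with W < v̄ < 2W. Define β = q/p < 1 and h(t) = v̄·(t·β^t/(β^t - 1) - 1/(β-1)) - W·t for real t > 0. Then h is decreasing in t. -/

import Mathlib

open Set

lemma key_log (u : ℝ) (hu0 : 0 < u) (hu1 : u ≤ 1) :
    u ^ 2 - 1 ≤ 2 * u * Real.log u := by
  set F : ℝ → ℝ := fun x => Real.log x - x / 2 + (2 * x)⁻¹ with hF
  have hder : ∀ x ∈ Ioi (0:ℝ), HasDerivAt F (x⁻¹ - 1/2 + -2/(2*x)^2) x := by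
    intro x hx
    have hx0 : (0:ℝ) < x := hx
    have h1 : HasDerivAt (fun y : ℝ => Real.log y) x⁻¹ x := Real.hasDerivAt_log hx0.ne'
    have h2 : HasDerivAt (fun y : ℝ => y / 2) (1/2) x := by
      simpa using (hasDerivAt_id x).div_const 2
    have h3 : HasDerivAt (fun y : ℝ => (2 * y)⁻¹) (-2/(2*x)^2) x := by
      have : HasDerivAt (fun y : ℝ => 2 * y) 2 x := by
        simpa using (hasDerivAt_id x).const_mul 2
      exact this.inv (by positivity)
    exact (h1.sub h2).add h3
  have hanti : AntitoneOn F (Ioi (0:ℝ)) := by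
    apply antitoneOn_of_deriv_nonpos (convex_Ioi 0)
    · exact fun x hx => (hder x hx).differentiableAt.continuousAt.continuousWithinAt
    · rw [interior_Ioi]
      exact fun x hx => (hder x hx).differentiableAt.differentiableWithinAt
    · rw [interior_Ioi]
      intro x hx
      rw [(hder x hx).deriv]
      have hx0 : (0:ℝ) < x := hx
      have heq : x⁻¹ - 1/2 + -2/(2*x)^2 = -((x-1)^2 / (2*x^2)) := by
        field_simp
        ring
      rw [heq]
      have : (0:ℝ) ≤ (x-1)^2 / (2*x^2) := by positivity
      linarith
  have hFu : F 1 ≤ F u := hanti hu0 (by norm_num) hu1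
  have hF1 : F 1 = 0 := by simp [hF]
  rw [hF1] at hFu
  simp only [hF] at hFu
  have h2u : (0:ℝ) < 2 * u := by linarith
  nlinarith [mul_nonneg h2u.le hFu, mul_inv_cancel₀ (ne_of_gt h2u)]

lemma hasDerivAt_h (β W v : ℝ) (hβ0 : 0 < β) (hβ1 : β < 1) (h : ℝ → ℝ)
    (hh : ∀ t, h t = v * (t * β ^ t / (β ^ t - 1) - 1 / (β - 1)) - W * t)
    (t : ℝ) (ht : 0 < t) :
    HasDerivAt h
      (v * (β ^ t * (β ^ t - 1 - t * Real.log β) / (β ^ t - 1) ^ 2) - W) t := by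
  have hfun : h = fun s => v * (s * β ^ s / (β ^ s - 1) - 1 / (β - 1)) - W * s :=
    funext hh
  rw [hfun]
  have hu : HasDerivAt (fun s : ℝ => β ^ s) (β ^ t * Real.log β) t :=
    (Real.hasStrictDerivAt_const_rpow hβ0 t).hasDerivAt
  have hult : β ^ t < 1 := Real.rpow_lt_one hβ0.le hβ1 ht
  have hne : β ^ t - 1 ≠ 0 := by linarith
  have hnum : HasDerivAt (fun s : ℝ => s * β ^ s)
      (1 * β ^ t + t * (β ^ t * Real.log β)) t := (hasDerivAt_id t).mul hu
  have hden : HasDerivAt (fun s : ℝ => β ^ s - 1) (β ^ t * Real.log β) t :=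
    hu.sub_const 1
  have hdiv := hnum.div hden hne
  have hfull := ((hdiv.sub_const (1 / (β - 1))).const_mul v).sub
    ((hasDerivAt_id t).const_mul W)
  have hXY : β ^ t * (β ^ t - 1 - t * Real.log β) / (β ^ t - 1) ^ 2
      = ((1 * β ^ t + t * (β ^ t * Real.log β)) * (β ^ t - 1)
          - t * β ^ t * (β ^ t * Real.log β)) / (β ^ t - 1) ^ 2 := by
    rw [div_eq_div_iff (pow_ne_zero 2 hne) (pow_ne_zero 2 hne)]
    ring
  convert hfull using 1
  · rfl
  · rfl
  · rfl
  rw [hXY, mul_one]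

theorem stmt_11 (p q W v : ℝ) (hp : p ∈ Ioo (0:ℝ) 1) (hq : q ∈ Ioo (0:ℝ) 1)
    (hqp : q < p) (hW : 0 < W) (hv1 : W < v) (hv2 : v < 2 * W)
    (β : ℝ) (hβ : β = q / p)
    (h : ℝ → ℝ)
    (hh : ∀ t, h t = v * (t * β ^ t / (β ^ t - 1) - 1 / (β - 1)) - W * t) :
    StrictAntiOn h (Ioi (0:ℝ)) := by
  obtain ⟨hp0, hp1⟩ := hp
  obtain ⟨hq0, hq1⟩ := hq
  have hβ0 : 0 < β := by rw [hβ]; positivity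
  have hβ1 : β < 1 := by rw [hβ]; exact (div_lt_one hp0).2 hqp
  apply strictAntiOn_of_deriv_neg (convex_Ioi 0)
  · intro t ht
    exact (hasDerivAt_h β W v hβ0 hβ1 h hh t ht).differentiableAt.continuousAt.continuousWithinAt
  · intro t ht
    rw [interior_Ioi] at ht
    rw [(hasDerivAt_h β W v hβ0 hβ1 h hh t ht).deriv]
    set u : ℝ := β ^ t with hu
    have hu0 : 0 < u := Real.rpow_pos_of_pos hβ0 t
    have hu1 : u < 1 := Real.rpow_lt_one hβ0.le hβ1 ht
    have hlog : t * Real.log β = Real.log u := (Real.log_rpow hβ0 t).symm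
    rw [hlog]
    have hd : 0 < (u - 1) ^ 2 := pow_two_pos_of_ne_zero (sub_ne_zero.mpr hu1.ne)
    have hkey : u ^ 2 - 1 ≤ 2 * u * Real.log u := key_log u hu0 hu1.le
    have h1 : u * (u - 1 - Real.log u) / (u - 1) ^ 2 ≤ 1 / 2 := by
      rw [div_le_iff₀ hd]
      nlinarith
    have hv0 : 0 < v := lt_trans hW hv1
    have h2 : v * (u * (u - 1 - Real.log u) / (u - 1) ^ 2) ≤ v * (1 / 2) :=
      mul_le_mul_of_nonneg_left h1 hv0.le
    linarith
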